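/- arXiv:1802.07632 — 2 statements merged into one kernel-verified Lean document; each statement's English description precedes it below -/
import Mathlib

section
/- There exist a constant C > 0 and an integer n₀ such that for every n ≥ n₀ and every real p with 64·(ln n)/n ≤ p ≤ 1, in the Erdős–Rényi random graph G(n,p) the following holds with probability at least 1 − C/n²: every nonempty vertex set S with |S| ≤ 1/p satisfies |N(S)| ≥ (n·p/16)·|S|. -/
open SimpleGraph

namespace STCPaper

variable {V : Type*}

/-- The number of edges of `G` with exactly one endpoint in `S`. -/
noncomputable def cutCount (G : SimpleGraph V) (S : Set V) : ℕ :=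
  {e ∈ G.edgeSet | ∃ a b, e = s(a, b) ∧ a ∈ S ∧ b ∉ S}.ncard

/-- The degree of a vertex. -/
noncomputable def deg (G : SimpleGraph V) (v : V) : ℕ := (G.neighborSet v).ncard

/-- The number of edges of a graph. -/
noncomputable def numEdges (G : SimpleGraph V) : ℕ := G.edgeSet.ncard

/-- `T` is a spanning tree of `G`. -/
def IsSpanningTree (G T : SimpleGraph V) : Prop := T ≤ G ∧ T.IsTree

/-- The congestion of a spanning tree `T` of `G`: the maximum, over tree edges `e = {u,v}`,
of the number of edges of `G` crossing the cut induced by deleting `e` from `T`. -/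
noncomputable def congestion (G T : SimpleGraph V) : ℕ :=
  sSup {c | ∃ u v, T.Adj u v ∧
    c = cutCount G {w | (T.deleteEdges {s(u, v)}).Reachable w u}}

/-- The spanning tree congestion of `G`. -/
noncomputable def STC (G : SimpleGraph V) : ℕ :=
  sInf {c | ∃ T, IsSpanningTree G T ∧ c = congestion G T}

/-- `G` is `k`-(vertex-)connected: it has more than `k` vertices, and deleting any
set of fewer than `k` vertices leaves a connected graph. -/
def IsKConnected [Fintype V] (G : SimpleGraph V) (k : ℕ) : Prop :=
  k < Fintype.card V ∧ ∀ S : Set V, S.ncard < k → (G.induce Sᶜ).Connected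

/-- A `k`-connected-partition: a partition of the vertex set into `k` nonempty parts,
each inducing a connected subgraph. -/
def IsConnectedPartition [Fintype V] [DecidableEq V] (G : SimpleGraph V) {k : ℕ}
    (P : Fin k → Finset V) : Prop :=
  (∀ j, (P j).Nonempty) ∧
  (∀ i j, i ≠ j → Disjoint (P i) (P j)) ∧
  Finset.univ.biUnion P = Finset.univ ∧
  ∀ j, (G.induce (↑(P j) : Set V)).Connected

/-- The number of vertices outside `S` adjacent to some vertex of `S`. -/
noncomputable def nbrCount (G : SimpleGraph V) (S : Set V) : ℕ :=
  {v | v ∉ S ∧ ∃ u ∈ S, G.Adj u v}.ncard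

/-- The number of vertices in `W` adjacent to some vertex of `S'`. -/
noncomputable def nbrWithinCount (G : SimpleGraph V) (S' W : Set V) : ℕ :=
  {v ∈ W | ∃ u ∈ S', G.Adj u v}.ncard

/-- The Erdős–Rényi measure: product Bernoulli(p) measure on potential edges. -/
noncomputable def erdosRenyi (n : ℕ) (p : ℝ) :
    MeasureTheory.Measure (Sym2 (Fin n) → Bool) :=
  MeasureTheory.Measure.pi fun _ =>
    (PMF.bernoulli (min (Real.toNNReal p) 1) (min_le_right _ _)).toMeasure

/-- The simple graph sampled from an outcome `ω`. -/
def graphOf {n : ℕ} (ω : Sym2 (Fin n) → Bool) : SimpleGraph (Fin n) :=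
  SimpleGraph.fromEdgeSet {e | ω e = true}

end STCPaper


open MeasureTheory Finset STCPaper
open scoped ENNReal

namespace STCHelper

variable {ι : Type*} [Fintype ι] [DecidableEq ι]

lemma sum_pi_bool_prod (f : ι → Bool → ℝ≥0∞) :
    ∑ ω : ι → Bool, ∏ i, f i (ω i) = ∏ i, (f i true + f i false) := by
  have h := Fintype.prod_sum (κ := fun _ : ι => Bool) (R := ℝ≥0∞) (f := f)
  rw [← h]
  refine Finset.prod_congr rfl fun i _ => ?_
  simp [Fintype.sum_bool]

-- measurability: every set in a finite discrete pi space is measurable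
lemma measurableSet_all {n : ℕ} (A : Set (Sym2 (Fin n) → Bool)) : MeasurableSet A := by
  have hsing : ∀ ω : Sym2 (Fin n) → Bool, MeasurableSet {ω} := by
    intro ω
    have : {ω} = ⋂ e : Sym2 (Fin n), (fun f => f e) ⁻¹' {ω e} := by
      ext f; simp [funext_iff]
    rw [this]
    exact MeasurableSet.iInter fun e => (measurable_pi_apply e) (measurableSet_singleton _)
  have : A = ⋃ ω ∈ A, {ω} := by simp
  rw [this]
  exact MeasurableSet.biUnion (Set.to_countable A) fun ω _ => hsing ω


lemma sum_pi_prod_eq_one {κ : Type*} [Fintype κ] [DecidableEq κ] {T : κ → Type*} [∀ k, Fintype (T k)]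
    (W : (k : κ) → T k → ℝ≥0∞) (hW : ∀ k, ∑ τ : T k, W k τ = 1) :
    ∑ σ : (k : κ) → T k, ∏ k, W k (σ k) = 1 := by
  rw [← Fintype.prod_sum]
  simp [hW]

lemma sum_pi_mul_single {κ : Type*} [Fintype κ] [DecidableEq κ] {T : κ → Type*}
    [∀ k, Fintype (T k)] (W : (k : κ) → T k → ℝ≥0∞)
    (hW : ∀ k, ∑ τ : T k, W k τ = 1) (k : κ) (H : T k → ℝ≥0∞) :
    ∑ σ : (k' : κ) → T k', (∏ k', W k' (σ k')) * H (σ k) = ∑ τ : T k, W k τ * H τ := by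
  classical
  set E := Equiv.piSplitAt k T with hE
  have hsum := E.symm.sum_comp (fun σ => (∏ k', W k' (σ k')) * H (σ k))
  rw [← hsum]
  have hk : ∀ x : T k × ((j : { j // j ≠ k }) → T j), E.symm x k = x.1 := by
    intro x; simp [hE, Equiv.piSplitAt]
  have hne : ∀ (x : T k × ((j : { j // j ≠ k }) → T j)) (j : { j // j ≠ k }),
      E.symm x j.1 = x.2 j := by
    intro x j; simp [hE, Equiv.piSplitAt, j.2]
  have hprod : ∀ x : T k × ((j : { j // j ≠ k }) → T j),
      (∏ k', W k' (E.symm x k')) = W k x.1 * ∏ j : { j // j ≠ k }, W j.1 (x.2 j) := by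
    intro x
    rw [Fintype.prod_eq_mul_prod_compl k]
    congr 1
    · rw [hk]
    · rw [Finset.prod_subtype ({k}ᶜ : Finset κ) (p := fun j => j ≠ k) (by simp)
        (fun j => W j (E.symm x j))]
      exact Fintype.prod_congr _ _ fun j => by rw [hne x j]
  rw [Fintype.sum_prod_type]
  have : ∀ τ : T k, ∑ ρ : (j : { j // j ≠ k }) → T j,
      (∏ k', W k' (E.symm (τ, ρ) k')) * H (E.symm (τ, ρ) k)
      = W k τ * H τ * ∑ ρ : (j : { j // j ≠ k }) → T j, ∏ j, W j.1 (ρ j) := by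
    intro τ
    rw [Finset.mul_sum]
    refine Finset.sum_congr rfl fun ρ _ => ?_
    rw [hprod (τ, ρ), hk (τ, ρ)]
    ring
  calc ∑ τ : T k, ∑ ρ : (j : { j // j ≠ k }) → T j,
        (∏ k', W k' (E.symm (τ, ρ) k')) * H (E.symm (τ, ρ) k)
      = ∑ τ : T k, W k τ * H τ * ∑ ρ : (j : { j // j ≠ k }) → T j, ∏ j, W j.1 (ρ j) := by
        exact Finset.sum_congr rfl fun τ _ => this τ
    _ = ∑ τ : T k, W k τ * H τ := by
        rw [sum_pi_prod_eq_one (fun j : { j // j ≠ k } => W j.1) (fun j => hW j.1)]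
        simp

lemma sum_pi_bool_mul_prod {κ : Type*} [Fintype κ] [DecidableEq κ]
    (w : ι → Bool → ℝ≥0∞) (hw : ∀ i, w i true + w i false = 1)
    (c : ι → κ) (G : κ → (ι → Bool) → ℝ≥0∞)
    (hG : ∀ k (ω ω' : ι → Bool), (∀ i, c i = k → ω i = ω' i) → G k ω = G k ω') :
    ∑ ω : ι → Bool, (∏ i, w i (ω i)) * ∏ k, G k ω =
      ∏ k, ∑ ω : ι → Bool, (∏ i, w i (ω i)) * G k ω := by
  classical
  -- the grouping equivalence
  set E : (ι → Bool) ≃ ((k : κ) → {i : ι // c i = k} → Bool) :=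
  { toFun := fun ω k i => ω i.1
    invFun := fun σ i => σ (c i) ⟨i, rfl⟩
    left_inv := fun ω => rfl
    right_inv := fun σ => by
      funext k i
      obtain ⟨i, hi⟩ := i
      subst hi
      rfl } with hEdef
  -- block weights
  set Wb : (k : κ) → ({i : ι // c i = k} → Bool) → ℝ≥0∞ :=
    fun k τ => ∏ i : {i : ι // c i = k}, w i.1 (τ i) with hWb
  have hWb1 : ∀ k, ∑ τ : {i : ι // c i = k} → Bool, Wb k τ = 1 := by
    intro k
    rw [hWb, sum_pi_bool_prod]
    simp [hw]
  -- block functions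
  set Hb : (k : κ) → ({i : ι // c i = k} → Bool) → ℝ≥0∞ :=
    fun k τ => G k (E.symm (Function.update (fun _ => fun _ => false) k τ)) with hHb
  have hGH : ∀ (σ : (k : κ) → {i : ι // c i = k} → Bool) (k : κ),
      G k (E.symm σ) = Hb k (σ k) := by
    intro σ k
    refine hG k _ _ fun i hi => ?_
    subst hi
    simp [hEdef, Function.update_self]
  have hWprod : ∀ σ : (k : κ) → {i : ι // c i = k} → Bool,
      (∏ i, w i (E.symm σ i)) = ∏ k, Wb k (σ k) := by
    intro σ
    rw [← Fintype.prod_equiv (Equiv.sigmaFiberEquiv c)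
      (fun x => w ((Equiv.sigmaFiberEquiv c) x) (E.symm σ ((Equiv.sigmaFiberEquiv c) x)))
      (fun i => w i (E.symm σ i)) (fun x => rfl)]
    rw [← Finset.univ_sigma_univ, Finset.prod_sigma]
    refine Fintype.prod_congr _ _ fun k => ?_
    refine Fintype.prod_congr _ _ fun i => ?_
    obtain ⟨i, hi⟩ := i
    subst hi
    rfl
  -- change variables in the LHS
  have hsum := E.symm.sum_comp (fun ω => (∏ i, w i (ω i)) * ∏ k, G k ω)
  rw [← hsum]
  have hLHS : ∀ σ : (k : κ) → {i : ι // c i = k} → Bool,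
      (∏ i, w i (E.symm σ i)) * ∏ k, G k (E.symm σ)
        = ∏ k, Wb k (σ k) * Hb k (σ k) := by
    intro σ
    rw [hWprod σ, ← Finset.prod_mul_distrib]
    exact Finset.prod_congr rfl fun k _ => by rw [hGH σ k]
  calc ∑ σ : (k : κ) → {i : ι // c i = k} → Bool,
        (∏ i, w i (E.symm σ i)) * ∏ k, G k (E.symm σ)
      = ∑ σ : (k : κ) → {i : ι // c i = k} → Bool, ∏ k, Wb k (σ k) * Hb k (σ k) := by
        exact Finset.sum_congr rfl fun σ _ => hLHS σ
    _ = ∏ k, ∑ τ : {i : ι // c i = k} → Bool, Wb k τ * Hb k τ :=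
        (Fintype.prod_sum fun k (τ : {i : ι // c i = k} → Bool) => Wb k τ * Hb k τ).symm
    _ = ∏ k, ∑ ω : ι → Bool, (∏ i, w i (ω i)) * G k ω := by
        refine Fintype.prod_congr _ _ fun k => ?_
        have h2 := E.symm.sum_comp (fun ω => (∏ i, w i (ω i)) * G k ω)
        rw [← h2]
        have : ∀ σ : (k : κ) → {i : ι // c i = k} → Bool,
            (∏ i, w i (E.symm σ i)) * G k (E.symm σ) = (∏ k', Wb k' (σ k')) * Hb k (σ k) := by
          intro σ; rw [hWprod σ, hGH σ k]
        rw [Finset.sum_congr rfl fun σ _ => this σ]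
        exact (sum_pi_mul_single Wb hWb1 k (Hb k)).symm

noncomputable def wt (p : ℝ) : Bool → ℝ≥0∞ :=
  fun b => cond b (ENNReal.ofReal p) (1 - ENNReal.ofReal p)

lemma wt_sum {p : ℝ} (hp1 : p ≤ 1) : wt p true + wt p false = 1 := by
  simp only [wt, cond]
  exact add_tsub_cancel_of_le (ENNReal.ofReal_le_one.mpr hp1)

lemma erdosRenyi_singleton {n : ℕ} {p : ℝ} (hp1 : p ≤ 1) (ω : Sym2 (Fin n) → Bool) :
    erdosRenyi n p {ω} = ∏ e, wt p (ω e) := by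
  have h1 : ({ω} : Set (Sym2 (Fin n) → Bool)) = Set.pi Set.univ (fun e => {ω e}) := by
    ext f; simp [funext_iff, Set.mem_pi]
  rw [erdosRenyi, h1, MeasureTheory.Measure.pi_pi]
  refine Fintype.prod_congr _ _ fun e => ?_
  rw [PMF.toMeasure_apply_singleton _ _ (measurableSet_singleton _)]
  have hmin : min (Real.toNNReal p) 1 = Real.toNNReal p :=
    min_eq_left (Real.toNNReal_le_one.mpr hp1)
  rw [PMF.bernoulli_apply, hmin]
  cases ω e <;> rfl

lemma erdosRenyi_finset {n : ℕ} {p : ℝ} (hp1 : p ≤ 1) (A : Finset (Sym2 (Fin n) → Bool)) :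
    erdosRenyi n p ↑A = ∑ ω ∈ A, ∏ e, wt p (ω e) := by
  have h1 : (↑A : Set (Sym2 (Fin n) → Bool)) = ⋃ ω ∈ A, {ω} := by
    ext f; simp
  rw [h1, measure_biUnion_finset]
  · exact Finset.sum_congr rfl fun ω _ => erdosRenyi_singleton hp1 ω
  · intro x _ y _ hxy
    simp [Function.onFun, Set.disjoint_singleton, hxy]
  · intro ω _; exact measurableSet_singleton ω

variable {n : ℕ} {p : ℝ}

open scoped Classical in
noncomputable def Xcnt {n : ℕ} (S : Finset (Fin n)) (ω : Sym2 (Fin n) → Bool) : ℕ :=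
  (Sᶜ.filter (fun v => ∃ u ∈ S, ω s(u, v) = true)).card

open scoped Classical in
lemma mgf_eq (hp1 : p ≤ 1) (S : Finset (Fin n)) (hS : S.Nonempty) :
    ∑ ω : Sym2 (Fin n) → Bool, (∏ e, wt p (ω e)) * (2⁻¹ : ℝ≥0∞) ^ (Xcnt S ω)
      = (2⁻¹ * (1 + (1 - ENNReal.ofReal p) ^ S.card)) ^ (n - S.card) := by
  obtain ⟨v₀, hv₀⟩ := hS
  -- the block assignment
  set f : Fin n → Fin n → Fin n := fun x y =>
    if x ∈ S then (if y ∈ S then v₀ else y) else (if y ∈ S then x else v₀) with hf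
  have hfsymm : ∀ x y, f x y = f y x := by
    intro x y
    by_cases hx : x ∈ S <;> by_cases hy : y ∈ S <;> simp [hf, hx, hy]
  set c : Sym2 (Fin n) → Fin n := Sym2.lift ⟨f, hfsymm⟩ with hc
  have hcuv : ∀ u v, u ∈ S → v ∉ S → c s(u, v) = v := by
    intro u v hu hv
    simp [hc, Sym2.lift_mk, hf, hu, hv]
  -- block functions
  set G : Fin n → (Sym2 (Fin n) → Bool) → ℝ≥0∞ := fun v ω =>
    if v ∈ S then 1 else (if ∃ u ∈ S, ω s(u, v) = true then 2⁻¹ else 1) with hG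
  -- step a : the mgf factors through blocks
  have ha : ∀ ω : Sym2 (Fin n) → Bool, (2⁻¹ : ℝ≥0∞) ^ (Xcnt S ω) = ∏ v, G v ω := by
    intro ω
    rw [← Finset.prod_mul_prod_compl S (fun v => G v ω)]
    have h1 : ∏ v ∈ S, G v ω = 1 := Finset.prod_eq_one fun v hv => by simp [hG, hv]
    have h2 : ∏ v ∈ Sᶜ, G v ω
        = ∏ v ∈ Sᶜ, (if ∃ u ∈ S, ω s(u, v) = true then (2⁻¹ : ℝ≥0∞) else 1) := by
      refine Finset.prod_congr rfl fun v hv => ?_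
      simp [hG, (Finset.mem_compl.mp hv)]
    rw [h1, h2, one_mul, ← Finset.prod_filter_mul_prod_filter_not Sᶜ
      (fun v => ∃ u ∈ S, ω s(u, v) = true)]
    have h3 : ∏ v ∈ Sᶜ.filter (fun v => ∃ u ∈ S, ω s(u, v) = true),
        (if ∃ u ∈ S, ω s(u, v) = true then (2⁻¹ : ℝ≥0∞) else 1) = 2⁻¹ ^ (Xcnt S ω) := by
      rw [Finset.prod_congr rfl (fun v hv => if_pos (Finset.mem_filter.mp hv).2),
        Finset.prod_const]
      rfl
    have h4 : ∏ v ∈ Sᶜ.filter (fun v => ¬ ∃ u ∈ S, ω s(u, v) = true),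
        (if ∃ u ∈ S, ω s(u, v) = true then (2⁻¹ : ℝ≥0∞) else 1) = 1 :=
      Finset.prod_eq_one fun v hv => by simp [(Finset.mem_filter.mp hv).2]
    rw [h3, h4, mul_one]
  -- step b : independence
  have hGdep : ∀ v (ω ω' : Sym2 (Fin n) → Bool),
      (∀ e, c e = v → ω e = ω' e) → G v ω = G v ω' := by
    intro v ω ω' h
    by_cases hv : v ∈ S
    · simp [hG, hv]
    · have : (∃ u ∈ S, ω s(u, v) = true) ↔ (∃ u ∈ S, ω' s(u, v) = true) := by
        constructor
        · rintro ⟨u, hu, hω⟩; exact ⟨u, hu, by rw [← h _ (hcuv u v hu hv), hω]⟩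
        · rintro ⟨u, hu, hω⟩; exact ⟨u, hu, by rw [h _ (hcuv u v hu hv), hω]⟩
      simp only [hG, hv, if_false]
      rw [if_congr this rfl rfl]
  have hb : ∑ ω : Sym2 (Fin n) → Bool, (∏ e, wt p (ω e)) * (2⁻¹ : ℝ≥0∞) ^ (Xcnt S ω)
      = ∏ v, ∑ ω : Sym2 (Fin n) → Bool, (∏ e, wt p (ω e)) * G v ω := by
    rw [← sum_pi_bool_mul_prod (fun _ => wt p) (fun _ => wt_sum hp1) c G hGdep]
    exact Finset.sum_congr rfl fun ω _ => by rw [ha ω]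
  rw [hb]
  -- step c : per-block expectation
  have hWone : ∑ ω : Sym2 (Fin n) → Bool, (∏ e, wt p (ω e)) = 1 := by
    rw [sum_pi_bool_prod]
    exact Finset.prod_eq_one fun e _ => wt_sum hp1
  have hc1 : ∀ v ∈ S, ∑ ω : Sym2 (Fin n) → Bool, (∏ e, wt p (ω e)) * G v ω = 1 := by
    intro v hv
    simp only [hG, hv, if_true, mul_one]
    exact hWone
  have hc2 : ∀ v, v ∉ S → ∑ ω : Sym2 (Fin n) → Bool, (∏ e, wt p (ω e)) * G v ω
      = 2⁻¹ * (1 + (1 - ENNReal.ofReal p) ^ S.card) := by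
    intro v hv
    set Bv : Finset (Sym2 (Fin n)) := S.image (fun u => s(u, v)) with hBv
    have hGv : ∀ ω : Sym2 (Fin n) → Bool, G v ω
        = 2⁻¹ * (1 + (if ∀ u ∈ S, ω s(u, v) = false then (1 : ℝ≥0∞) else 0)) := by
      intro ω
      by_cases hex : ∃ u ∈ S, ω s(u, v) = true
      · have : ¬ ∀ u ∈ S, ω s(u, v) = false := by
          push_neg
          obtain ⟨u, hu, hωu⟩ := hex
          exact ⟨u, hu, by simp [hωu]⟩
        simp [hG, hv, hex, this]
      · have hall : ∀ u ∈ S, ω s(u, v) = false := by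
          intro u hu
          by_contra hne
          exact hex ⟨u, hu, by simpa using hne⟩
        simp only [hG, hv, if_false, if_neg hex, if_pos hall]
        rw [one_add_one_eq_two]
        exact (ENNReal.inv_mul_cancel (by norm_num) (by norm_num)).symm
    have hind : ∀ ω : Sym2 (Fin n) → Bool,
        (if ∀ u ∈ S, ω s(u, v) = false then (1 : ℝ≥0∞) else 0)
          = ∏ e, (if e ∈ Bv then (cond (ω e) 0 1) else 1) := by
      intro ω
      rw [Finset.prod_ite_mem, Finset.univ_inter]
      have : ∀ e ∈ Bv, (cond (ω e) 0 1 : ℝ≥0∞) = if ω e = false then 1 else 0 := by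
        intro e _; cases h : ω e <;> simp
      rw [Finset.prod_congr rfl this, Finset.prod_boole]
      congr 1
      rw [eq_iff_iff]
      constructor
      · rintro h e he
        simp only [hBv, Finset.mem_image] at he
        obtain ⟨u, hu, rfl⟩ := he
        exact h u hu
      · intro h u hu
        exact h s(u, v) (Finset.mem_image_of_mem _ hu)
    have hsum2 : ∑ ω : Sym2 (Fin n) → Bool,
        (∏ e, wt p (ω e)) * ∏ e, (if e ∈ Bv then (cond (ω e) 0 1) else 1)
          = (1 - ENNReal.ofReal p) ^ S.card := by
      have : ∀ ω : Sym2 (Fin n) → Bool,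
          (∏ e, wt p (ω e)) * ∏ e, (if e ∈ Bv then (cond (ω e) 0 1) else 1)
            = ∏ e, (wt p (ω e) * (if e ∈ Bv then (cond (ω e) 0 1) else 1)) := by
        intro ω; rw [Finset.prod_mul_distrib]
      rw [Finset.sum_congr rfl fun ω _ => this ω,
        sum_pi_bool_prod (fun e b => wt p b * (if e ∈ Bv then (cond b 0 1) else 1))]
      have hBvcard : Bv.card = S.card := by
        rw [hBv, Finset.card_image_of_injOn]
        intro u _ u' _ h
        exact Sym2.congr_left.mp h
      calc ∏ e, (wt p true * (if e ∈ Bv then (cond true 0 1 : ℝ≥0∞) else 1)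
            + wt p false * (if e ∈ Bv then (cond false 0 1 : ℝ≥0∞) else 1))
          = ∏ e, (if e ∈ Bv then (1 - ENNReal.ofReal p) else 1) := by
            refine Fintype.prod_congr _ _ fun e => ?_
            by_cases heBv : e ∈ Bv
            · simp [heBv, wt]
            · simp only [heBv, if_false, mul_one]
              have h := wt_sum (p := p) hp1
              simpa [wt] using h
        _ = (1 - ENNReal.ofReal p) ^ Bv.card := by
            rw [Finset.prod_ite_mem, Finset.univ_inter, Finset.prod_const]
        _ = (1 - ENNReal.ofReal p) ^ S.card := by rw [hBvcard]
    calc ∑ ω : Sym2 (Fin n) → Bool, (∏ e, wt p (ω e)) * G v ω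
        = ∑ ω : Sym2 (Fin n) → Bool, (2⁻¹ * ((∏ e, wt p (ω e))
            + (∏ e, wt p (ω e)) * ∏ e, (if e ∈ Bv then (cond (ω e) 0 1) else 1))) := by
          refine Finset.sum_congr rfl fun ω _ => ?_
          rw [hGv ω, ← hind ω]
          ring
      _ = 2⁻¹ * (1 + (1 - ENNReal.ofReal p) ^ S.card) := by
          rw [← Finset.mul_sum, Finset.sum_add_distrib, hWone, hsum2]
  -- step d : collect the product
  calc ∏ v, ∑ ω : Sym2 (Fin n) → Bool, (∏ e, wt p (ω e)) * G v ω
      = ∏ v : Fin n, (if v ∈ S then 1 else 2⁻¹ * (1 + (1 - ENNReal.ofReal p) ^ S.card)) := by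
        refine Fintype.prod_congr _ _ fun v => ?_
        by_cases hv : v ∈ S
        · rw [if_pos hv]; exact hc1 v hv
        · rw [if_neg hv]; exact hc2 v hv
    _ = (2⁻¹ * (1 + (1 - ENNReal.ofReal p) ^ S.card)) ^ (n - S.card) := by
        rw [← Finset.prod_mul_prod_compl S]
        rw [Finset.prod_eq_one fun v hv => by rw [if_pos hv], one_mul]
        have : ∀ v ∈ Sᶜ, (if v ∈ S then 1 else 2⁻¹ * (1 + (1 - ENNReal.ofReal p) ^ S.card))
            = 2⁻¹ * (1 + (1 - ENNReal.ofReal p) ^ S.card) := by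
          intro v hv; rw [if_neg (Finset.mem_compl.mp hv)]
        rw [Finset.prod_congr rfl this, Finset.prod_const, Finset.card_compl,
          Fintype.card_fin]

lemma one_sub_pow_le (p : ℝ) (hp0 : 0 ≤ p) (hp1 : p ≤ 1) :
    ∀ s : ℕ, (1 - p) ^ s ≤ 1 - s * p + (s * p) ^ 2 / 2
  | 0 => by norm_num
  | (s + 1) => by
    have IH := one_sub_pow_le p hp0 hp1 s
    have h2 : (1 - p) ^ s * (1 - p) ≤ (1 - s * p + (s * p) ^ 2 / 2) * (1 - p) :=
      mul_le_mul_of_nonneg_right IH (by linarith)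
    rw [pow_succ]
    refine h2.trans ?_
    have hs0 : (0:ℝ) ≤ (s:ℝ) := Nat.cast_nonneg s
    push_cast
    nlinarith [sq_nonneg ((s:ℝ) * p), sq_nonneg p,
      mul_nonneg (mul_nonneg (mul_nonneg hs0 hs0) (mul_nonneg hp0 hp0)) hp0]

lemma real_term_bound (n s : ℕ) (p : ℝ) (hn : 1000 ≤ n) (hps : 64 * Real.log n / n ≤ p)
    (hp1 : p ≤ 1) (hs1 : 1 ≤ s) (hs : (s : ℝ) ≤ 1 / p) :
    2 ^ (⌈(n:ℝ) * p / 16 * s⌉₊) * ((1 + (1 - p) ^ s) / 2) ^ (n - s) ≤ ((n:ℝ)⁻¹) ^ (12 * s) := by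
  have hn' : (1000 : ℝ) ≤ n := by exact_mod_cast hn
  have hn0 : (0 : ℝ) < n := by linarith
  have hlog6 : 6 ≤ Real.log n := by
    have h6 : Real.exp 6 ≤ 1000 := by
      have h1 : Real.exp 6 = Real.exp 1 ^ (6:ℕ) := by
        rw [← Real.exp_nat_mul]; norm_num
      have h2 := Real.exp_one_lt_d9
      rw [h1]
      calc Real.exp 1 ^ (6:ℕ) ≤ 2.7182818286 ^ (6:ℕ) :=
            pow_le_pow_left₀ (Real.exp_pos 1).le h2.le 6
        _ ≤ 1000 := by norm_num
    rw [Real.le_log_iff_exp_le hn0]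
    linarith
  have hL0 : 0 < Real.log n := by linarith
  have hp0 : 0 < p := lt_of_lt_of_le (by positivity) hps
  have hsp : (s : ℝ) * p ≤ 1 := by
    rw [le_div_iff₀ hp0] at hs; linarith
  have hsp0 : (0:ℝ) ≤ (s:ℝ) * p := by positivity
  have hnp : 64 * Real.log n ≤ (n:ℝ) * p := by
    rw [div_le_iff₀ hn0] at hps; linarith
  have hsn : (s : ℝ) ≤ (n:ℝ) / 64 := by
    have h1 : (1:ℝ) / p ≤ 1 / (64 * Real.log n / n) :=
      one_div_le_one_div_of_le (by positivity) hps
    have h2 : (1:ℝ) / (64 * Real.log n / n) = n / (64 * Real.log n) := by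
      field_simp
    have h3 : (n:ℝ) / (64 * Real.log n) ≤ n / 64 := by
      apply div_le_div_of_nonneg_left hn0.le (by norm_num)
      linarith
    calc (s:ℝ) ≤ 1 / p := hs
      _ ≤ n / (64 * Real.log n) := by rw [← h2]; exact h1
      _ ≤ n / 64 := h3
  have hsnn : s ≤ n := by
    have : (s:ℝ) ≤ n := by linarith
    exact_mod_cast this
  have ha0 : (0:ℝ) ≤ (n:ℝ) * p / 16 * s := by positivity
  have haK : (⌈(n:ℝ) * p / 16 * s⌉₊ : ℝ) ≤ (n:ℝ) * p / 16 * s + 1 := (Nat.ceil_lt_add_one ha0).le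
  have hlog2 : Real.log 2 < 0.6931471808 := Real.log_two_lt_d9
  have hlog2' : 0 < Real.log 2 := Real.log_pos (by norm_num)
  have h2K : (2:ℝ) ^ (⌈(n:ℝ) * p / 16 * s⌉₊) ≤
      Real.exp (((n:ℝ) * p / 16 * s + 1) * Real.log 2) := by
    have he : (2:ℝ) ^ (⌈(n:ℝ) * p / 16 * s⌉₊)
        = Real.exp ((⌈(n:ℝ) * p / 16 * s⌉₊ : ℕ) * Real.log 2) := by
      rw [Real.exp_nat_mul, Real.exp_log (by norm_num)]
    rw [he]
    exact Real.exp_le_exp.mpr (mul_le_mul_of_nonneg_right haK hlog2'.le)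
  have hq : (1 - p) ^ s ≤ 1 - (s:ℝ) * p / 2 := by
    have h1 := one_sub_pow_le p hp0.le hp1 s
    nlinarith [sq_nonneg ((s:ℝ) * p)]
  have hρ0 : (0:ℝ) ≤ (1 + (1 - p) ^ s) / 2 := by
    have : (0:ℝ) ≤ (1 - p) ^ s := pow_nonneg (by linarith) s
    linarith
  have hρ : (1 + (1 - p) ^ s) / 2 ≤ Real.exp (-((s:ℝ) * p / 4)) := by
    have h2 : 1 - (s:ℝ) * p / 4 ≤ Real.exp (-((s:ℝ) * p / 4)) := by
      have := Real.add_one_le_exp (-((s:ℝ) * p / 4))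
      linarith
    linarith
  have hcast : ((n - s : ℕ) : ℝ) = (n:ℝ) - s := by
    rw [Nat.cast_sub hsnn]
  have hρpow : ((1 + (1 - p) ^ s) / 2) ^ (n - s)
      ≤ Real.exp (-((s:ℝ) * p / 4) * ((n:ℝ) - s)) := by
    calc ((1 + (1 - p) ^ s) / 2) ^ (n - s) ≤ (Real.exp (-((s:ℝ) * p / 4))) ^ (n - s) :=
          pow_le_pow_left₀ hρ0 hρ _
      _ = Real.exp (-((s:ℝ) * p / 4) * ((n - s : ℕ) : ℝ)) := by
          rw [← Real.exp_nat_mul]; ring_nf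
      _ = Real.exp (-((s:ℝ) * p / 4) * ((n:ℝ) - s)) := by rw [hcast]
  have hcomb : 2 ^ (⌈(n:ℝ) * p / 16 * s⌉₊) * ((1 + (1 - p) ^ s) / 2) ^ (n - s)
      ≤ Real.exp (((n:ℝ) * p / 16 * s + 1) * Real.log 2
          + (-((s:ℝ) * p / 4) * ((n:ℝ) - s))) := by
    rw [Real.exp_add]
    exact mul_le_mul h2K hρpow (by positivity) (Real.exp_pos _).le
  refine hcomb.trans ?_
  have hx : 64 * ((s:ℝ) * Real.log n) ≤ (n:ℝ) * p * s := by
    have h := mul_le_mul_of_nonneg_right hnp (Nat.cast_nonneg s : (0:ℝ) ≤ s)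
    linarith [h]
  have h64 : (s:ℝ) * ((s:ℝ) * p) ≤ (n:ℝ) * p * s / 64 := by
    have h := mul_le_mul_of_nonneg_right hsn hsp0
    linarith [h]
  have hsL : 6 ≤ (s:ℝ) * Real.log n := by
    have hs1' : (1:ℝ) ≤ s := by exact_mod_cast hs1
    calc (6:ℝ) = 1 * 6 := by norm_num
      _ ≤ (s:ℝ) * Real.log n := mul_le_mul hs1' hlog6 (by norm_num) (Nat.cast_nonneg s)
  have hfinal : ((n:ℝ) * p / 16 * s + 1) * Real.log 2 + (-((s:ℝ) * p / 4) * ((n:ℝ) - s))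
      ≤ -(((12 * s : ℕ) : ℝ) * Real.log n) := by
    push_cast
    have e1 : -((s:ℝ) * p / 4) * ((n:ℝ) - s)
        = -((n:ℝ) * p * s) / 4 + ((s:ℝ) * ((s:ℝ) * p)) / 4 := by ring
    have b1 : -((s:ℝ) * p / 4) * ((n:ℝ) - s) ≤ -(63/256) * ((n:ℝ) * p * s) := by
      rw [e1]; linarith [h64]
    have b2 : ((n:ℝ) * p / 16 * s + 1) * Real.log 2
        ≤ ((n:ℝ) * p / 16 * s + 1) * 0.7 := by
      apply mul_le_mul_of_nonneg_left (by linarith) (by linarith [ha0])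
    have e2 : (n:ℝ) * p / 16 * s = ((n:ℝ) * p * s) / 16 := by ring
    rw [e2] at b2
    linarith [hx, hsL, b1, b2]
  refine (Real.exp_le_exp.mpr hfinal).trans ?_
  rw [Real.exp_neg, Real.exp_nat_mul, Real.exp_log hn0, ← inv_pow]

lemma one_le_two_pow_mul {X K : ℕ} (h : X ≤ K) : (1 : ℝ≥0∞) ≤ 2 ^ K * 2⁻¹ ^ X := by
  rw [← ENNReal.inv_pow]
  have h2 : (2:ℝ≥0∞) ^ K = 2 ^ (K - X) * 2 ^ X := by
    rw [← pow_add, Nat.sub_add_cancel h]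
  rw [h2, mul_assoc, ENNReal.mul_inv_cancel (by positivity) (by simp), mul_one]
  calc (1:ℝ≥0∞) = 1 ^ (K - X) := (one_pow _).symm
    _ ≤ 2 ^ (K - X) := pow_le_pow_left' one_le_two _

open scoped Classical in
lemma nbrCount_eq {n : ℕ} (S : Finset (Fin n)) (ω : Sym2 (Fin n) → Bool) :
    nbrCount (graphOf ω) ↑S = Xcnt S ω := by
  rw [nbrCount, Xcnt]
  rw [← Set.ncard_coe_finset]
  congr 1
  ext v
  simp only [Finset.coe_filter, Set.mem_setOf_eq, Finset.mem_compl, Finset.mem_coe]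
  constructor
  · rintro ⟨hv, u, hu, hadj⟩
    rw [graphOf, SimpleGraph.fromEdgeSet_adj] at hadj
    exact ⟨hv, u, hu, hadj.1⟩
  · rintro ⟨hv, u, hu, hω⟩
    refine ⟨hv, u, hu, ?_⟩
    rw [graphOf, SimpleGraph.fromEdgeSet_adj]
    exact ⟨hω, fun huv => hv (huv ▸ hu)⟩

lemma ofReal_conversion {n s : ℕ} {p : ℝ} (hp0 : 0 ≤ p) (hp1 : p ≤ 1) :
    (2:ℝ≥0∞) ^ (⌈(n:ℝ) * p / 16 * s⌉₊) * (2⁻¹ * (1 + (1 - ENNReal.ofReal p) ^ s)) ^ (n - s)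
      = ENNReal.ofReal (2 ^ (⌈(n:ℝ) * p / 16 * s⌉₊) * ((1 + (1 - p) ^ s) / 2) ^ (n - s)) := by
  have h1 : (1 : ℝ≥0∞) - ENNReal.ofReal p = ENNReal.ofReal (1 - p) := by
    rw [ENNReal.ofReal_sub _ hp0, ENNReal.ofReal_one]
  have hx : (0:ℝ) ≤ (1 - p) ^ s := pow_nonneg (by linarith) s
  symm
  rw [ENNReal.ofReal_mul (by positivity), ENNReal.ofReal_pow (by norm_num : (0:ℝ) ≤ 2),
    ENNReal.ofReal_pow (by linarith : (0:ℝ) ≤ (1 + (1 - p) ^ s) / 2),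
    ENNReal.ofReal_div_of_pos (by norm_num : (0:ℝ) < 2),
    ENNReal.ofReal_add (by norm_num : (0:ℝ) ≤ 1) hx,
    ENNReal.ofReal_pow (by linarith : (0:ℝ) ≤ 1 - p), ← h1,
    ENNReal.ofReal_one]
  have h2 : ENNReal.ofReal 2 = 2 := by norm_num
  rw [h2]
  congr 1
  rw [ENNReal.div_eq_inv_mul]

open scoped Classical in
lemma measure_bad_le {n : ℕ} {p : ℝ} (hp0 : 0 ≤ p) (hp1 : p ≤ 1)
    (S : Finset (Fin n)) (hS : S.Nonempty) :
    erdosRenyi n p {ω | ((nbrCount (graphOf ω) ↑S : ℝ)) < (n:ℝ) * p / 16 * S.card}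
      ≤ ENNReal.ofReal (2 ^ (⌈(n:ℝ) * p / 16 * S.card⌉₊)
          * ((1 + (1 - p) ^ S.card) / 2) ^ (n - S.card)) := by
  set K := ⌈(n:ℝ) * p / 16 * S.card⌉₊ with hK
  set F : Finset (Sym2 (Fin n) → Bool) := Finset.univ.filter
    (fun ω => ((nbrCount (graphOf ω) ↑S : ℝ)) < (n:ℝ) * p / 16 * S.card) with hF
  have hset : {ω : Sym2 (Fin n) → Bool |
      ((nbrCount (graphOf ω) ↑S : ℝ)) < (n:ℝ) * p / 16 * S.card} = ↑F := by
    ext ω; simp [hF]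
  rw [hset, erdosRenyi_finset hp1 F]
  have hstep : ∀ ω ∈ F, (∏ e, wt p (ω e))
      ≤ (∏ e, wt p (ω e)) * (2 ^ K * 2⁻¹ ^ (Xcnt S ω)) := by
    intro ω hω
    have hlt : ((nbrCount (graphOf ω) ↑S : ℝ)) < (n:ℝ) * p / 16 * S.card :=
      (Finset.mem_filter.mp hω).2
    rw [nbrCount_eq S ω] at hlt
    have hle : Xcnt S ω ≤ K := by
      have h1 : ((Xcnt S ω : ℝ)) < (K:ℝ) := lt_of_lt_of_le hlt (Nat.le_ceil _)
      exact_mod_cast h1.le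
    exact le_mul_of_one_le_right zero_le (one_le_two_pow_mul hle)
  calc ∑ ω ∈ F, ∏ e, wt p (ω e)
      ≤ ∑ ω ∈ F, (∏ e, wt p (ω e)) * (2 ^ K * 2⁻¹ ^ (Xcnt S ω)) :=
        Finset.sum_le_sum hstep
    _ ≤ ∑ ω : Sym2 (Fin n) → Bool, (∏ e, wt p (ω e)) * (2 ^ K * 2⁻¹ ^ (Xcnt S ω)) :=
        Finset.sum_le_sum_of_subset (Finset.subset_univ F)
    _ = 2 ^ K * ∑ ω : Sym2 (Fin n) → Bool, (∏ e, wt p (ω e)) * 2⁻¹ ^ (Xcnt S ω) := by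
        rw [Finset.mul_sum]
        exact Finset.sum_congr rfl fun ω _ => by ring
    _ = 2 ^ K * (2⁻¹ * (1 + (1 - ENNReal.ofReal p) ^ S.card)) ^ (n - S.card) := by
        rw [mgf_eq hp1 S hS]
    _ = ENNReal.ofReal (2 ^ K * ((1 + (1 - p) ^ S.card) / 2) ^ (n - S.card)) :=
        ofReal_conversion hp0 hp1

end STCHelper

open STCPaper in
/-- With probability at least `1 − C/n²`, every nonempty set `S` with `|S| ≤ 1/p` in
`G(n,p)` satisfies `|N(S)| ≥ (np/16)·|S|`. -/
theorem stmt_13 :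
    ∃ C : ℝ, 0 < C ∧ ∃ n₀ : ℕ, ∀ n : ℕ, n₀ ≤ n → ∀ p : ℝ,
      64 * Real.log n / n ≤ p → p ≤ 1 →
      ENNReal.ofReal (1 - C / (n : ℝ) ^ 2) ≤
        erdosRenyi n p {ω | ∀ S : Finset (Fin n), S.Nonempty → (S.card : ℝ) ≤ 1 / p →
          (n : ℝ) * p / 16 * S.card ≤ (nbrCount (graphOf ω) ↑S : ℝ)} := by
  classical
  refine ⟨1, one_pos, 1000, fun n hn p hps hp1 => ?_⟩
  have hn' : (1000:ℝ) ≤ n := by exact_mod_cast hn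
  have hn0 : (0:ℝ) < n := by linarith
  have hp0 : (0:ℝ) ≤ p := by
    refine le_trans ?_ hps
    have : (0:ℝ) ≤ Real.log n := Real.log_nonneg (by linarith)
    positivity
  haveI : IsProbabilityMeasure (erdosRenyi n p) := by
    rw [STCPaper.erdosRenyi]; infer_instance
  set E : Set (Sym2 (Fin n) → Bool) :=
    {ω | ∀ S : Finset (Fin n), S.Nonempty → (S.card : ℝ) ≤ 1 / p →
      (n : ℝ) * p / 16 * S.card ≤ (nbrCount (graphOf ω) ↑S : ℝ)} with hE
  set Bad : Finset (Fin n) → Set (Sym2 (Fin n) → Bool) := fun S =>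
    {ω | ((nbrCount (graphOf ω) ↑S : ℝ)) < (n:ℝ) * p / 16 * S.card} with hBad
  set 𝒮 : Finset (Finset (Fin n)) := Finset.univ.powerset.filter
    (fun S => S.Nonempty ∧ (S.card : ℝ) ≤ 1 / p) with h𝒮
  have hcover : Eᶜ ⊆ ⋃ S ∈ 𝒮, Bad S := by
    intro ω hω
    simp only [hE, Set.mem_compl_iff, Set.mem_setOf_eq] at hω
    push_neg at hω
    obtain ⟨S, hSne, hScard, hSlt⟩ := hω
    have hS𝒮 : S ∈ 𝒮 := by
      simp only [h𝒮, Finset.mem_filter, Finset.mem_powerset]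
      exact ⟨Finset.subset_univ S, hSne, hScard⟩
    exact Set.mem_biUnion hS𝒮 hSlt
  have hunion : erdosRenyi n p Eᶜ ≤ ∑ S ∈ 𝒮, erdosRenyi n p (Bad S) :=
    (measure_mono hcover).trans (measure_biUnion_finset_le 𝒮 Bad)
  have hterm : ∀ S ∈ 𝒮, erdosRenyi n p (Bad S)
      ≤ ENNReal.ofReal (((n:ℝ)⁻¹) ^ (12 * S.card)) := by
    intro S hS
    simp only [h𝒮, Finset.mem_filter] at hS
    obtain ⟨-, hSne, hScard⟩ := hS
    refine (STCHelper.measure_bad_le hp0 hp1 S hSne).trans (ENNReal.ofReal_le_ofReal ?_)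
    exact STCHelper.real_term_bound n S.card p hn hps hp1 (Finset.card_pos.mpr hSne) hScard
  -- the real sum bound
  have hreal : ∑ S ∈ 𝒮, ((n:ℝ)⁻¹) ^ (12 * S.card) ≤ 1 / (n:ℝ)^2 := by
    have hsub : 𝒮 ⊆ (Finset.Icc 1 n).biUnion
        (fun k => Finset.powersetCard k (Finset.univ : Finset (Fin n))) := by
      intro S hS
      simp only [h𝒮, Finset.mem_filter] at hS
      obtain ⟨-, hSne, -⟩ := hS
      refine Finset.mem_biUnion.mpr ⟨S.card, ?_, ?_⟩
      · exact Finset.mem_Icc.mpr ⟨Finset.card_pos.mpr hSne,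
          le_trans (Finset.card_le_univ S) (by simp)⟩
      · exact Finset.mem_powersetCard.mpr ⟨Finset.subset_univ S, rfl⟩
    have hdisj : (↑(Finset.Icc 1 n) : Set ℕ).PairwiseDisjoint
        (fun k => Finset.powersetCard k (Finset.univ : Finset (Fin n))) := by
      intro a _ b _ hab
      simp only [Function.onFun]
      rw [Finset.disjoint_left]
      intro S hSa hSb
      exact hab ((Finset.mem_powersetCard.mp hSa).2.symm.trans
        (Finset.mem_powersetCard.mp hSb).2)
    calc ∑ S ∈ 𝒮, ((n:ℝ)⁻¹) ^ (12 * S.card)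
        ≤ ∑ S ∈ (Finset.Icc 1 n).biUnion
            (fun k => Finset.powersetCard k (Finset.univ : Finset (Fin n))),
            ((n:ℝ)⁻¹) ^ (12 * S.card) :=
          Finset.sum_le_sum_of_subset_of_nonneg hsub (fun S _ _ => by positivity)
      _ = ∑ k ∈ Finset.Icc 1 n, ∑ S ∈ Finset.powersetCard k (Finset.univ : Finset (Fin n)),
            ((n:ℝ)⁻¹) ^ (12 * S.card) := Finset.sum_biUnion hdisj
      _ = ∑ k ∈ Finset.Icc 1 n, ((n.choose k : ℝ) * ((n:ℝ)⁻¹) ^ (12 * k)) := by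
          refine Finset.sum_congr rfl fun k _ => ?_
          rw [Finset.sum_congr rfl
            (fun S hS => by rw [(Finset.mem_powersetCard.mp hS).2]),
            Finset.sum_const, Finset.card_powersetCard, Finset.card_univ,
            Fintype.card_fin, nsmul_eq_mul]
      _ ≤ ∑ k ∈ Finset.Icc 1 n, ((n:ℝ)⁻¹) ^ 11 := by
          refine Finset.sum_le_sum fun k hk => ?_
          obtain ⟨hk1, hk2⟩ := Finset.mem_Icc.mp hk
          have hch : ((n.choose k : ℝ)) ≤ (n:ℝ) ^ k := by
            exact_mod_cast Nat.choose_le_pow n k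
          have hsplit : ((n:ℝ))^k * ((n:ℝ)⁻¹) ^ (12 * k) = ((n:ℝ)⁻¹) ^ (11 * k) := by
            rw [show 12 * k = k + 11 * k by ring, pow_add, ← mul_assoc, ← mul_pow,
              mul_inv_cancel₀ (ne_of_gt hn0), one_pow, one_mul]
          have hle1 : ((n:ℝ)⁻¹) ^ (11 * k) ≤ ((n:ℝ)⁻¹) ^ 11 := by
            apply pow_le_pow_of_le_one (by positivity)
            · rw [inv_le_one_iff₀]; right; linarith
            · omega
          calc (n.choose k : ℝ) * ((n:ℝ)⁻¹) ^ (12 * k)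
              ≤ (n:ℝ)^k * ((n:ℝ)⁻¹) ^ (12 * k) :=
                mul_le_mul_of_nonneg_right hch (by positivity)
            _ = ((n:ℝ)⁻¹) ^ (11 * k) := hsplit
            _ ≤ ((n:ℝ)⁻¹) ^ 11 := hle1
      _ = (n : ℝ) * ((n:ℝ)⁻¹) ^ 11 := by
          rw [Finset.sum_const, Nat.card_Icc]
          simp [nsmul_eq_mul]
      _ = ((n:ℝ)⁻¹) ^ 10 := by
          rw [show (11:ℕ) = 1 + 10 by norm_num, pow_add, pow_one, ← mul_assoc,
            mul_inv_cancel₀ (ne_of_gt hn0), one_mul]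
      _ ≤ ((n:ℝ)⁻¹) ^ 2 := by
          apply pow_le_pow_of_le_one (by positivity)
          · rw [inv_le_one_iff₀]; right; linarith
          · omega
      _ = 1 / (n:ℝ)^2 := by rw [inv_pow, one_div]
  have hbad : erdosRenyi n p Eᶜ ≤ ENNReal.ofReal (1 / (n:ℝ)^2) := by
    refine hunion.trans ?_
    calc ∑ S ∈ 𝒮, erdosRenyi n p (Bad S)
        ≤ ∑ S ∈ 𝒮, ENNReal.ofReal (((n:ℝ)⁻¹) ^ (12 * S.card)) := Finset.sum_le_sum hterm
      _ = ENNReal.ofReal (∑ S ∈ 𝒮, ((n:ℝ)⁻¹) ^ (12 * S.card)) :=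
          (ENNReal.ofReal_sum_of_nonneg fun S _ => by positivity).symm
      _ ≤ ENNReal.ofReal (1 / (n:ℝ)^2) := ENNReal.ofReal_le_ofReal hreal
  have hEc : erdosRenyi n p E = 1 - erdosRenyi n p Eᶜ := by
    have h := prob_compl_eq_one_sub (μ := erdosRenyi n p) (STCHelper.measurableSet_all Eᶜ)
    rw [compl_compl] at h
    exact h
  have hn2 : (0:ℝ) ≤ 1 / (n:ℝ)^2 := by positivity
  have hn2' : 1 / (n:ℝ)^2 ≤ 1 := by
    rw [div_le_one (by positivity)]
    nlinarith
  calc ENNReal.ofReal (1 - 1 / (n:ℝ)^2)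
      ≤ 1 - ENNReal.ofReal (1 / (n:ℝ)^2) := by
        refine ENNReal.le_sub_of_add_le_right ENNReal.ofReal_ne_top ?_
        rw [← ENNReal.ofReal_add (by linarith) hn2, sub_add_cancel]
        exact le_of_eq ENNReal.ofReal_one
    _ ≤ 1 - erdosRenyi n p Eᶜ := tsub_le_tsub_left hbad 1
    _ = erdosRenyi n p E := hEc.symm
end

section
/- For every integer n ≥ 1 and every real p with 0 < p ≤ 1, in the Erdős–Rényi random graph G(n,p) the following holds with probability at least 1 − e^{−n}: for every vertex set A with |A| ≤ n/2 and every S ⊆ A, the number of vertices in V∖A adjacent to some vertex of S is at least |S| − 12/p. -/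
open SimpleGraph

section Aux
open MeasureTheory STCPaper

lemma stc_aux_cyl (n : ℕ) (p : ℝ) (hp0 : 0 ≤ p) (hp1 : p ≤ 1) (F : Finset (Sym2 (Fin n))) :
    erdosRenyi n p {ω | ∀ e ∈ F, ω e = false} = ENNReal.ofReal (1 - p) ^ F.card := by
  classical
  have hmin : min (Real.toNNReal p) 1 = Real.toNNReal p :=
    min_eq_left (Real.toNNReal_le_one.2 hp1)
  have hset : {ω : Sym2 (Fin n) → Bool | ∀ e ∈ F, ω e = false} =
      Set.univ.pi (fun e => if e ∈ F then ({false} : Set Bool) else Set.univ) := by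
    ext ω
    simp only [Set.mem_setOf_eq, Set.mem_pi, Set.mem_univ, forall_true_left]
    constructor
    · intro h e; by_cases he : e ∈ F <;> simp [he, h e]
    · intro h e he; have := h e; simp only [he, if_true, Set.mem_singleton_iff] at this
      exact this
  have hb : ((PMF.bernoulli (min (Real.toNNReal p) 1) (min_le_right _ _)).toMeasure)
      ({false} : Set Bool) = ENNReal.ofReal (1 - p) := by
    rw [PMF.toMeasure_apply_singleton _ _ (measurableSet_singleton _), PMF.bernoulli_apply]
    simp [hmin]
    rw [ENNReal.ofReal_sub 1 hp0, ENNReal.ofReal_one]; rfl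
  rw [STCPaper.erdosRenyi, hset, Measure.pi_pi]
  have hterm : ∀ e : Sym2 (Fin n),
      ((PMF.bernoulli (min (Real.toNNReal p) 1) (min_le_right _ _)).toMeasure)
        (if e ∈ F then ({false} : Set Bool) else Set.univ)
      = if e ∈ F then ENNReal.ofReal (1 - p) else 1 := by
    intro e; split
    · simp [hb]
    · exact measure_univ
  rw [Finset.prod_congr rfl (fun e _ => hterm e), Finset.prod_ite_mem, Finset.univ_inter,
    Finset.prod_const]

lemma stc_aux_E (n : ℕ) (p : ℝ) (hp0 : 0 < p) (hp1 : p ≤ 1) (S T : Finset (Fin n))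
    (hd : Disjoint S T) :
    erdosRenyi n p {ω | ∀ u ∈ S, ∀ v ∈ T, ω s(u, v) = false} ≤
      ENNReal.ofReal (Real.exp (-(p * S.card * T.card))) := by
  classical
  set F : Finset (Sym2 (Fin n)) := (S ×ˢ T).image (fun q => s(q.1, q.2)) with hF
  have hFcard : F.card = S.card * T.card := by
    rw [hF, Finset.card_image_of_injOn, Finset.card_product]
    rintro ⟨a, b⟩ hab ⟨c, d⟩ hcd h
    rw [Finset.mem_coe, Finset.mem_product] at hab hcd
    rcases Sym2.eq_iff.1 h with ⟨rfl, rfl⟩ | ⟨rfl, rfl⟩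
    · rfl
    · exact absurd hcd.2 (Finset.disjoint_left.1 hd hab.1)
  have hset : {ω : Sym2 (Fin n) → Bool | ∀ u ∈ S, ∀ v ∈ T, ω s(u, v) = false} =
      {ω | ∀ e ∈ F, ω e = false} := by
    ext ω
    simp only [Set.mem_setOf_eq]
    constructor
    · intro h e he
      obtain ⟨⟨u, v⟩, hq, rfl⟩ := Finset.mem_image.1 he
      exact h u (Finset.mem_product.1 hq).1 v (Finset.mem_product.1 hq).2
    · intro h u hu v hv
      exact h _ (Finset.mem_image.2 ⟨(u, v), Finset.mem_product.2 ⟨hu, hv⟩, rfl⟩)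
  rw [hset, stc_aux_cyl n p hp0.le hp1, hFcard,
    ← ENNReal.ofReal_pow (by linarith : (0:ℝ) ≤ 1 - p)]
  apply ENNReal.ofReal_le_ofReal
  calc (1 - p) ^ (S.card * T.card) ≤ Real.exp (-p) ^ (S.card * T.card) := by
        apply pow_le_pow_left₀ (by linarith)
        linarith [Real.add_one_le_exp (-p)]
    _ = Real.exp (-(p * S.card * T.card)) := by
        rw [← Real.exp_nat_mul]; congr 1; push_cast; ring

end Aux

open MeasureTheory


open STCPaper in
/-- With probability at least `1 − e^{−n}`, for every `A` with `|A| ≤ n/2` and every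
`S ⊆ A`, at least `|S| − 12/p` vertices outside `A` are adjacent to some vertex of `S`. -/
theorem stmt_14 (n : ℕ) (hn : 1 ≤ n) (p : ℝ) (hp0 : 0 < p) (hp1 : p ≤ 1) :
    ENNReal.ofReal (1 - Real.exp (-(n : ℝ))) ≤
      erdosRenyi n p {ω | ∀ A : Finset (Fin n), (A.card : ℝ) ≤ (n : ℝ) / 2 →
        ∀ S ⊆ A, (S.card : ℝ) - 12 / p ≤
          (nbrWithinCount (graphOf ω) ↑S (↑A : Set (Fin n))ᶜ : ℝ)} := by
  classical
  set μ := erdosRenyi n p with hμ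
  haveI hμprob : IsProbabilityMeasure μ := by
    rw [hμ, STCPaper.erdosRenyi]; infer_instance
  set good : Set (Sym2 (Fin n) → Bool) :=
    {ω | ∀ A : Finset (Fin n), (A.card : ℝ) ≤ (n : ℝ) / 2 →
        ∀ S ⊆ A, (S.card : ℝ) - 12 / p ≤
          (nbrWithinCount (graphOf ω) ↑S (↑A : Set (Fin n))ᶜ : ℝ)} with hgood
  set E : Finset (Fin n) × Finset (Fin n) → Set (Sym2 (Fin n) → Bool) :=
    fun q => {ω | ∀ u ∈ q.1, ∀ v ∈ q.2, ω s(u, v) = false} with hE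
  set Q : Finset (Finset (Fin n) × Finset (Fin n)) :=
    Finset.univ.filter
      (fun q => Disjoint q.1 q.2 ∧ (6 * n : ℝ) ≤ p * q.1.card * q.2.card) with hQ
  -- the bad set is covered by the events E q, q ∈ Q
  have hsub : goodᶜ ⊆ ⋃ q ∈ Q, E q := by
    intro ω hω
    rw [Set.mem_compl_iff, hgood, Set.mem_setOf_eq] at hω
    push_neg at hω
    obtain ⟨A, hA, S, hSA, hlt⟩ := hω
    set C : Finset (Fin n) := Aᶜ with hC
    set Nb : Finset (Fin n) := C.filter (fun v => ∃ u ∈ S, (graphOf ω).Adj u v) with hNb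
    set T : Finset (Fin n) := C.filter (fun v => ¬ ∃ u ∈ S, (graphOf ω).Adj u v) with hT
    -- identify nbrWithinCount with Nb.card
    have hnbr : nbrWithinCount (graphOf ω) ↑S (↑A : Set (Fin n))ᶜ = Nb.card := by
      rw [STCPaper.nbrWithinCount]
      have : {v | v ∈ (↑A : Set (Fin n))ᶜ ∧ ∃ u ∈ (↑S : Set (Fin n)), (graphOf ω).Adj u v}
          = ↑Nb := by
        ext v
        simp [hNb, hC, Finset.mem_filter, Finset.mem_compl]
      rw [show {v ∈ (↑A : Set (Fin n))ᶜ | ∃ u ∈ (↑S : Set (Fin n)), (graphOf ω).Adj u v}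
        = ↑Nb from this, Set.ncard_coe_finset]
    -- cardinalities
    have hcards : Nb.card + T.card = C.card :=
      Finset.card_filter_add_card_filter_not _
    have hCcard : C.card = n - A.card := by
      rw [hC, Finset.card_compl, Fintype.card_fin]
    have hAn : A.card ≤ n := by
      simpa using Finset.card_le_card (Finset.subset_univ A)
    have hCr : (C.card : ℝ) = (n : ℝ) - A.card := by
      rw [hCcard, Nat.cast_sub hAn]
    have hlt' : (Nb.card : ℝ) < (S.card : ℝ) - 12 / p := by rw [← hnbr]; exact hlt
    have hps : 12 < p * S.card := by
      have h1 : (0:ℝ) ≤ Nb.card := Nat.cast_nonneg _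
      have h2 : 12 / p < S.card := by linarith
      rw [div_lt_iff₀ hp0] at h2; linarith [h2]
    have hsA : (S.card : ℝ) ≤ A.card := by exact_mod_cast Finset.card_le_card hSA
    have hTcard : (n : ℝ) / 2 - S.card + 12 / p ≤ T.card := by
      have : (T.card : ℝ) = (C.card : ℝ) - Nb.card := by
        have := hcards; push_cast [← this]; ring
      rw [this, hCr]; linarith
    -- the key inequality 6n ≤ p s t
    have hkey : (6 * n : ℝ) ≤ p * S.card * T.card := by
      have hps0 : (0:ℝ) ≤ p * S.card := by positivity
      have h1 : p * S.card * ((n : ℝ) / 2 - S.card + 12 / p) ≤ p * S.card * T.card :=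
        mul_le_mul_of_nonneg_left hTcard hps0
      have h2 : p * S.card * ((n : ℝ) / 2 - S.card + 12 / p)
          = p * S.card * ((n : ℝ) / 2 - S.card) + 12 * S.card := by
        field_simp
      have hs2 : (S.card : ℝ) ≤ (n : ℝ) / 2 := le_trans hsA hA
      have h3 : 12 * ((n : ℝ) / 2 - S.card) ≤ p * S.card * ((n : ℝ) / 2 - S.card) :=
        mul_le_mul_of_nonneg_right (le_of_lt hps) (by linarith)
      linarith
    -- (S, T) ∈ Q and ω ∈ E (S, T)
    have hdisj : Disjoint S T := by
      rw [Finset.disjoint_left]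
      intro x hxS hxT
      have hxA : x ∈ A := hSA hxS
      have : x ∈ C := (Finset.mem_filter.1 hxT).1
      rw [hC, Finset.mem_compl] at this
      exact this hxA
    refine Set.mem_biUnion (show (S, T) ∈ Q from ?_) ?_
    · rw [hQ, Finset.mem_filter]
      exact ⟨Finset.mem_univ _, hdisj, hkey⟩
    · simp only [hE, Set.mem_setOf_eq]
      intro u hu v hv
      have hvC : v ∈ C := (Finset.mem_filter.1 hv).1
      have hvn : ¬ ∃ u ∈ S, (graphOf ω).Adj u v := (Finset.mem_filter.1 hv).2
      by_contra hωe
      rw [Bool.not_eq_false] at hωe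
      have huv : u ≠ v := by
        rintro rfl
        rw [hC, Finset.mem_compl] at hvC
        exact hvC (hSA hu)
      apply hvn
      refine ⟨u, hu, ?_⟩
      rw [STCPaper.graphOf, SimpleGraph.fromEdgeSet_adj]
      exact ⟨hωe, huv⟩
  -- each event has small probability
  have hEbound : ∀ q ∈ Q, μ (E q) ≤ ENNReal.ofReal (Real.exp (-(6 * n : ℝ))) := by
    intro q hq
    rw [hQ, Finset.mem_filter] at hq
    refine le_trans (stc_aux_E n p hp0 hp1 q.1 q.2 hq.2.1) ?_
    apply ENNReal.ofReal_le_ofReal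
    apply Real.exp_le_exp.2
    linarith [hq.2.2]
  -- union bound
  have hQcard : (Q.card : ENNReal) ≤ ((4 ^ n : ℕ) : ENNReal) := by
    have h1 : Q.card ≤ 4 ^ n := by
      calc Q.card ≤ Fintype.card (Finset (Fin n) × Finset (Fin n)) := Finset.card_le_univ Q
        _ = 4 ^ n := by
            rw [Fintype.card_prod, Fintype.card_finset, Fintype.card_fin, ← mul_pow]
            norm_num
    exact_mod_cast h1
  have hbad : μ goodᶜ ≤ ENNReal.ofReal (Real.exp (-(n : ℝ))) := by
    calc μ goodᶜ ≤ μ (⋃ q ∈ Q, E q) := measure_mono hsub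
      _ ≤ ∑ q ∈ Q, μ (E q) := measure_biUnion_finset_le Q E
      _ ≤ ∑ _q ∈ Q, ENNReal.ofReal (Real.exp (-(6 * n : ℝ))) := Finset.sum_le_sum hEbound
      _ = (Q.card : ENNReal) * ENNReal.ofReal (Real.exp (-(6 * n : ℝ))) := by
          rw [Finset.sum_const, nsmul_eq_mul]
      _ ≤ ((4 ^ n : ℕ) : ENNReal) * ENNReal.ofReal (Real.exp (-(6 * n : ℝ))) := by
          exact mul_le_mul_left hQcard _
      _ ≤ ENNReal.ofReal (Real.exp (-(n : ℝ))) := by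
          rw [show (((4 ^ n : ℕ)) : ENNReal) = ENNReal.ofReal ((4 : ℝ) ^ n) by
            rw [ENNReal.ofReal_pow (by norm_num)]; norm_num,
            ← ENNReal.ofReal_mul (by positivity)]
          apply ENNReal.ofReal_le_ofReal
          have h4 : (4 : ℝ) ^ n ≤ Real.exp (5 * n) := by
            rw [mul_comm, Real.exp_nat_mul]
            exact pow_le_pow_left₀ (by norm_num)
              (by nlinarith [Real.add_one_le_exp (5 : ℝ)]) n
          calc (4 : ℝ) ^ n * Real.exp (-(6 * n : ℝ))
              ≤ Real.exp (5 * n) * Real.exp (-(6 * n : ℝ)) := by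
                exact mul_le_mul_of_nonneg_right h4 (Real.exp_nonneg _)
            _ = Real.exp (-(n : ℝ)) := by rw [← Real.exp_add]; ring_nf
  -- conclude
  have hmeas : MeasurableSet goodᶜ := (Set.toFinite goodᶜ).measurableSet
  have hcompl : μ good = 1 - μ goodᶜ := by
    have h := prob_compl_eq_one_sub (μ := μ) hmeas
    rwa [compl_compl] at h
  rw [hcompl]
  calc ENNReal.ofReal (1 - Real.exp (-(n : ℝ)))
      = 1 - ENNReal.ofReal (Real.exp (-(n : ℝ))) := by
        rw [ENNReal.ofReal_sub 1 (Real.exp_nonneg _), ENNReal.ofReal_one]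
    _ ≤ 1 - μ goodᶜ := tsub_le_tsub_left hbad 1
end
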